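/- Let P be a ℚ-vector space and V = P ⊗_ℚ ℝ. If C is a cone in P that is open in P (in the strong topology over ℚ), then Cone_ℝ(C) is open in V (in the strong topology over ℝ). -/

import Mathlib

open TensorProduct

/-- `U` is open in the strong topology on `V`: its preimage under every linear map
from a finite-dimensional coordinate space `K^n` is open. -/
def StrongOpen (K : Type*) [Field K] [LinearOrder K] [IsStrictOrderedRing K] [TopologicalSpace K]
    {V : Type*} [AddCommGroup V] [Module K V] (U : Set V) : Prop :=
  ∀ (n : ℕ) (φ : (Fin n → K) →ₗ[K] V), IsOpen (φ ⁻¹' U)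

/-- `C` is a cone: closed under addition and multiplication by positive scalars. -/
def IsCone (K : Type*) [Field K] [LinearOrder K] [IsStrictOrderedRing K] {V : Type*} [AddCommGroup V]
    [Module K V] (C : Set V) : Prop :=
  (∀ x ∈ C, ∀ y ∈ C, x + y ∈ C) ∧ ∀ x ∈ C, ∀ l : K, 0 < l → l • x ∈ C

/-- The cone generated by `S`: positive linear combinations of elements of `S`. -/
def coneGen (K : Type*) [Field K] [LinearOrder K] [IsStrictOrderedRing K] {V : Type*} [AddCommGroup V]
    [Module K V] (S : Set V) : Set V :=
  { v | ∃ (n : ℕ) (a : Fin (n + 1) → V) (l : Fin (n + 1) → K),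
      (∀ i, a i ∈ S) ∧ (∀ i, 0 < l i) ∧ v = ∑ i, l i • a i }

section ConeLemmas
variable {K : Type*} [Field K] [LinearOrder K] [IsStrictOrderedRing K] {V W : Type*} [AddCommGroup V] [Module K V]
  [AddCommGroup W] [Module K W] {S T : Set V}

lemma coneGen_mono (h : S ⊆ T) : coneGen K S ⊆ coneGen K T := by
  rintro v ⟨n, a, l, ha, hl, rfl⟩
  exact ⟨n, a, l, fun i => h (ha i), hl, rfl⟩

lemma smul_mem_coneGen {s : V} (hs : s ∈ S) {l : K} (hl : 0 < l) :
    l • s ∈ coneGen K S :=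
  ⟨0, fun _ => s, fun _ => l, fun _ => hs, fun _ => hl, by simp⟩

lemma coneGen_add_single {v : V} (hv : v ∈ coneGen K S) {s : V} (hs : s ∈ S)
    {l : K} (hl : 0 < l) : l • s + v ∈ coneGen K S := by
  obtain ⟨n, a, c, ha, hc, rfl⟩ := hv
  refine ⟨n + 1, Fin.cons s a, Fin.cons l c, ?_, ?_, ?_⟩
  · exact fun i => Fin.cases hs ha i
  · exact fun i => Fin.cases hl hc i
  · conv_rhs => rw [Fin.sum_univ_succ]
    simp

lemma sum_add_mem_coneGen : ∀ (n : ℕ) (a : Fin (n + 1) → V) (c : Fin (n + 1) → K),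
    (∀ i, a i ∈ S) → (∀ i, 0 < c i) → ∀ v ∈ coneGen K S,
    (∑ i, c i • a i) + v ∈ coneGen K S := by
  intro n
  induction n with
  | zero =>
    intro a c ha hc v hv
    simpa using coneGen_add_single hv (ha 0) (hc 0)
  | succ n ih =>
    intro a c ha hc v hv
    rw [Fin.sum_univ_succ, add_assoc]
    exact coneGen_add_single (ih _ _ (fun i => ha i.succ) (fun i => hc i.succ) v hv) (ha 0) (hc 0)

lemma add_mem_coneGen {u v : V} (hu : u ∈ coneGen K S) (hv : v ∈ coneGen K S) :
    u + v ∈ coneGen K S := by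
  obtain ⟨n, a, c, ha, hc, rfl⟩ := hu
  exact sum_add_mem_coneGen n a c ha hc v hv

lemma smul_mem_coneGen' {v : V} (hv : v ∈ coneGen K S) {l : K} (hl : 0 < l) :
    l • v ∈ coneGen K S := by
  obtain ⟨n, a, c, ha, hc, rfl⟩ := hv
  exact ⟨n, a, fun i => l * c i, ha, fun i => mul_pos hl (hc i),
    by rw [Finset.smul_sum]; simp [smul_smul]⟩

lemma sum_mem_coneGen {ι : Type*} {t : Finset ι} (ht : t.Nonempty) {f : ι → V}
    (hf : ∀ i ∈ t, f i ∈ coneGen K S) : ∑ i ∈ t, f i ∈ coneGen K S := by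
  induction ht using Finset.Nonempty.cons_induction with
  | singleton i => simpa using hf _ (by simp)
  | cons i t hit ht ih =>
    rw [Finset.sum_cons]
    exact add_mem_coneGen (hf i (by simp)) (ih fun j hj => hf j (by simp [hj]))

lemma map_mem_coneGen (f : V →ₗ[K] W) {v : V} (hv : v ∈ coneGen K S) :
    f v ∈ coneGen K (f '' S) := by
  obtain ⟨n, a, c, ha, hc, rfl⟩ := hv
  exact ⟨n, f ∘ a, c, fun i => ⟨a i, ha i, rfl⟩, hc, by simp [map_sum]⟩

end ConeLemmas

lemma ball_subset_coneGen {m : ℕ} {D : Set (Fin m → ℚ)} (hD : IsOpen D)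
    {d₀ : Fin m → ℚ} (hd₀ : d₀ ∈ D) :
    ∃ ε : ℝ, 0 < ε ∧ ∀ c : Fin m → ℝ, (∀ i, |c i - (d₀ i : ℝ)| < ε) →
      c ∈ coneGen ℝ ((fun d : Fin m → ℚ => fun i => ((d i : ℝ))) '' D) := by
  set S' : Set (Fin m → ℝ) := (fun d : Fin m → ℚ => fun i => ((d i : ℝ))) '' D with hS'
  have hd₀' : (fun j => ((d₀ j : ℝ))) ∈ S' := ⟨d₀, hd₀, rfl⟩
  have hd₀cone : (fun j => ((d₀ j : ℝ))) ∈ coneGen ℝ S' := by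
    have := smul_mem_coneGen (K := ℝ) hd₀' one_pos
    rwa [one_smul] at this
  rcases Nat.eq_zero_or_pos m with hm | hm
  · refine ⟨1, one_pos, fun c _ => ?_⟩
    subst hm
    have : c = fun j => ((d₀ j : ℝ)) := funext fun j => j.elim0
    rw [this]; exact hd₀cone
  -- extract a rational ball radius
  obtain ⟨εq, hεq, hball⟩ := Metric.isOpen_iff.mp hD d₀ hd₀
  obtain ⟨δ, hδ0, hδε⟩ := exists_rat_btwn hεq
  have hδ0' : (0:ℚ) < δ := by exact_mod_cast hδ0
  have hδR : (0:ℝ) < (δ:ℝ) := hδ0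
  -- perturbed rational points are in D
  have hmem : ∀ (i : Fin m) (σ : ℚ), |σ| = δ →
      d₀ + σ • (Pi.single i 1 : Fin m → ℚ) ∈ D := by
    intro i σ hσ
    apply hball
    rw [Metric.mem_ball, dist_pi_lt_iff hεq]
    intro j
    rcases eq_or_ne j i with rfl | hj
    · have h1 : (d₀ + σ • (Pi.single j 1 : Fin m → ℚ)) j = d₀ j + σ := by simp
      rw [h1, Rat.dist_eq]
      have h2 : ((d₀ j + σ : ℚ) : ℝ) - ((d₀ j : ℚ) : ℝ) = (σ:ℝ) := by push_cast; ring
      rw [h2]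
      calc |(σ:ℝ)| = ((|σ| : ℚ) : ℝ) := by rw [Rat.cast_abs]
        _ = ((δ:ℚ):ℝ) := by rw [hσ]
        _ < εq := hδε
    · have h1 : (d₀ + σ • (Pi.single i 1 : Fin m → ℚ)) j = d₀ j := by
        simp [Pi.single_eq_of_ne hj]
      rw [h1, dist_self]
      exact hεq
  -- points at real distance < δ along one coordinate are in the cone
  have hE : ∀ (i : Fin m) (r : ℝ), |r| < (δ:ℝ) →
      (fun j => ((d₀ j : ℝ))) + r • (Pi.single i 1 : Fin m → ℝ) ∈ coneGen ℝ S' := by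
    intro i r hr
    rcases eq_or_ne r 0 with rfl | hr0
    · simpa using hd₀cone
    · set σ : ℚ := if 0 < r then δ else -δ with hσdef
      have hσabs : |σ| = δ := by
        rcases lt_trichotomy 0 r with h | h | h
        · simp [hσdef, h, abs_of_pos hδ0']
        · exact absurd h.symm hr0
        · rw [hσdef, if_neg (not_lt.mpr h.le), abs_neg, abs_of_pos hδ0']
      have hmemσ := hmem i σ hσabs
      have hrs : (|r| / (δ:ℝ)) * (σ:ℝ) = r := by
        rcases lt_or_gt_of_ne hr0 with h | h
        · rw [abs_of_neg h]
          simp only [hσdef, if_neg (not_lt.mpr h.le)]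
          push_cast
          field_simp
        · rw [abs_of_pos h]
          simp only [hσdef, if_pos h]
          field_simp
      have h1pos : 0 < 1 - |r| / (δ:ℝ) := by
        rw [sub_pos, div_lt_one hδR]; exact hr
      have h2pos : 0 < |r| / (δ:ℝ) := div_pos (abs_pos.mpr hr0) hδR
      have key : (fun j => ((d₀ j : ℝ))) + r • (Pi.single i 1 : Fin m → ℝ)
          = (1 - |r| / (δ:ℝ)) • (fun j => ((d₀ j : ℝ)))
            + (|r| / (δ:ℝ)) • (fun j => (((d₀ + σ • (Pi.single i 1 : Fin m → ℚ)) j : ℝ))) := by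
        funext j
        simp only [Pi.add_apply, Pi.smul_apply, smul_eq_mul, Pi.single_apply]
        push_cast
        rcases eq_or_ne j i with rfl | hj
        · norm_num
          linear_combination -hrs
        · simp only [if_neg hj]
          push_cast
          ring
      have hv' : (fun j => (((d₀ + σ • (Pi.single i 1 : Fin m → ℚ)) j : ℝ))) ∈ S' :=
        ⟨_, hmemσ, rfl⟩
      rw [key]
      exact add_mem_coneGen (smul_mem_coneGen (K := ℝ) hd₀' h1pos)
        (smul_mem_coneGen (K := ℝ) hv' h2pos)
  -- assemble
  refine ⟨(δ:ℝ) / m, div_pos hδR (by exact_mod_cast hm), fun c hc => ?_⟩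
  have hmR : (0:ℝ) < m := by exact_mod_cast hm
  have key : c = ∑ i : Fin m, (m:ℝ)⁻¹ •
      ((fun j => ((d₀ j : ℝ))) + ((m:ℝ) * (c i - d₀ i)) • (Pi.single i 1 : Fin m → ℝ)) := by
    funext j
    simp only [Finset.sum_apply, Pi.smul_apply, Pi.add_apply, smul_eq_mul, Pi.single_apply]
    have hstep : ∀ x : Fin m, (↑m)⁻¹ * (↑(d₀ j) + ↑m * (c x - ↑(d₀ x)) * if j = x then 1 else 0)
        = (↑m)⁻¹ * ↑(d₀ j) + (if j = x then c x - ↑(d₀ x) else 0) := by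
      intro x
      rcases eq_or_ne j x with rfl | h
      · simp only [if_pos rfl, mul_one]
        field_simp
        simp only [if_true, mul_one]
      · simp [h]
    simp_rw [hstep]
    rw [Finset.sum_add_distrib, Finset.sum_const, Finset.card_univ, Fintype.card_fin,
      Finset.sum_ite_eq]
    simp only [Finset.mem_univ, if_true, nsmul_eq_mul]
    field_simp
    ring
  rw [key]
  refine sum_mem_coneGen (Finset.univ_nonempty_iff.mpr ?_) (fun i _ => ?_)
  · exact Fin.pos_iff_nonempty.mp hm
  · refine smul_mem_coneGen' (hE i _ ?_) (inv_pos.mpr hmR)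
    rw [abs_mul, abs_of_pos hmR]
    calc (m:ℝ) * |c i - (d₀ i : ℝ)| < (m:ℝ) * ((δ:ℝ) / m) := by
          exact (mul_lt_mul_iff_right₀ hmR).mpr (hc i)
      _ = (δ:ℝ) := by field_simp

lemma reindex_sum {ι M : Type*} [AddCommMonoid M] (s : Finset ι) (f : ι → M) :
    ∑ i : Fin s.card, f ↑(s.equivFin.symm i) = ∑ t ∈ s, f t := by
  rw [← Finset.sum_coe_sort s f]
  exact Equiv.sum_comp s.equivFin.symm fun t => f ↑t

lemma sum_repr_eq {R M ι : Type*} [CommRing R] [AddCommGroup M] [Module R M]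
    (b : Module.Basis ι R M) (s : Finset ι) (v : M) (h : ∀ t ∉ s, b.repr v t = 0) :
    ∑ t ∈ s, b.repr v t • b t = v := by
  classical
  have hsub : (b.repr v).support ⊆ s := fun t ht => by
    by_contra hts; exact Finsupp.mem_support_iff.mp ht (h t hts)
  conv_rhs => rw [← b.linearCombination_repr v]
  rw [Finsupp.linearCombination_apply, Finsupp.sum]
  exact (Finset.sum_subset hsub fun t _ hts => by
    rw [Finsupp.notMem_support_iff.mp hts, zero_smul]).symm

theorem coneGenReal_strongOpen (P : Type*) [AddCommGroup P] [Module ℚ P]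
    (C : Set P) (hC : IsCone ℚ C) (hopen : StrongOpen ℚ C) :
    StrongOpen ℝ (coneGen ℝ ((fun p : P => ((1 : ℝ) ⊗ₜ[ℚ] p : ℝ ⊗[ℚ] P)) '' C)) := by
  classical
  intro n φ
  rw [isOpen_iff_mem_nhds]
  rintro x₀ hx₀
  obtain ⟨k, a, l, ha, hl, hsum⟩ := hx₀
  choose p hp hpa using ha
  set b := Module.Basis.ofVectorSpace ℚ P with hb
  set bR := b.baseChange ℝ with hbR
  set s : Finset _ :=
    (Finset.univ.biUnion fun j : Fin n => (bR.repr (φ (Pi.single j 1))).support) ∪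
      Finset.univ.biUnion fun i : Fin (k+1) => (b.repr (p i)).support with hs
  have hnot : ∀ t, t ∉ s → (∀ j : Fin n, bR.repr (φ (Pi.single j 1)) t = 0) ∧
      (∀ i : Fin (k+1), b.repr (p i) t = 0) := by
    intro t ht
    simp only [hs, Finset.mem_union, Finset.mem_biUnion, Finset.mem_univ, true_and, not_or,
      not_exists, Finsupp.mem_support_iff, not_not] at ht
    exact ht
  have hxdecomp : ∀ x : Fin n → ℝ, φ x = ∑ j, x j • φ (Pi.single j 1) := by
    intro x
    have hx : x = ∑ j, x j • (Pi.single j 1 : Fin n → ℝ) := by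
      funext j'
      simp [Pi.single_apply, Finset.sum_apply]
    conv_lhs => rw [hx]
    rw [map_sum]
    simp only [map_smul]
  have hsuppφ : ∀ (x : Fin n → ℝ) (t), t ∉ s → bR.repr (φ x) t = 0 := by
    intro x t ht
    rw [hxdecomp x, map_sum, Finset.sum_apply']
    exact Finset.sum_eq_zero fun j _ => by
      rw [map_smul, Finsupp.smul_apply, (hnot t ht).1 j, smul_zero]
  set e : Fin s.card ≃ ↥s := s.equivFin.symm with he
  -- the coordinate maps
  set ptQ : (Fin s.card → ℚ) →ₗ[ℚ] P :=
    { toFun := fun d => ∑ i, d i • b ↑(e i)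
      map_add' := fun d₁ d₂ => by simp [add_smul, Finset.sum_add_distrib]
      map_smul' := fun q d => by simp [smul_smul, Finset.smul_sum] } with hptQ
  set ptR : (Fin s.card → ℝ) →ₗ[ℝ] (ℝ ⊗[ℚ] P) :=
    { toFun := fun d => ∑ i, d i • bR ↑(e i)
      map_add' := fun d₁ d₂ => by simp [add_smul, Finset.sum_add_distrib]
      map_smul' := fun q d => by simp [smul_smul, Finset.smul_sum] } with hptR
  set π : (ℝ ⊗[ℚ] P) →ₗ[ℝ] (Fin s.card → ℝ) :=
    LinearMap.pi (fun i => Finsupp.lapply ↑(e i) ∘ₗ bR.repr.toLinearMap) with hπ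
  have hπ_apply : ∀ (v) (i), π v i = bR.repr v ↑(e i) := fun v i => rfl
  have hrecon : ∀ v : ℝ ⊗[ℚ] P, (∀ t ∉ s, bR.repr v t = 0) → ptR (π v) = v := by
    intro v hv
    show ∑ i, π v i • bR ↑(e i) = v
    simp only [hπ_apply]
    exact (reindex_sum s (fun t => bR.repr v t • bR t)).trans (sum_repr_eq bR s v hv)
  -- rational coordinates of the points p i
  set d : Fin (k+1) → (Fin s.card → ℚ) := fun i j => b.repr (p i) ↑(e j) with hd
  have hptQd : ∀ i, ptQ (d i) = p i := by
    intro i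
    show ∑ j, b.repr (p i) ↑(e j) • b ↑(e j) = p i
    exact (reindex_sum s (fun t => b.repr (p i) t • b t)).trans
      (sum_repr_eq b s (p i) fun t ht => (hnot t ht).2 i)
  have hrepr_tmul : ∀ (x : P) (t), bR.repr ((1:ℝ) ⊗ₜ[ℚ] x) t = ((b.repr x t : ℚ) : ℝ) := by
    intro x t
    rw [hbR, Module.Basis.baseChange_repr_tmul]
    simp [Rat.smul_one_eq_cast]
  have hK2 : ∀ dq : Fin s.card → ℚ, ptR (fun i => ((dq i : ℝ))) = (1:ℝ) ⊗ₜ[ℚ] ptQ dq := by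
    intro dq
    show ∑ i, (dq i : ℝ) • bR ↑(e i) = (1:ℝ) ⊗ₜ[ℚ] (∑ i, dq i • b ↑(e i))
    rw [tmul_sum]
    refine Finset.sum_congr rfl fun i _ => ?_
    rw [hbR, Module.Basis.baseChange_apply, tmul_smul]
    rw [← algebraMap_smul (R := ℚ) ℝ (dq i) ((1:ℝ) ⊗ₜ[ℚ] b ↑(e i))]
    norm_num
  -- D is open and contains the d i
  set D : Set (Fin s.card → ℚ) := ptQ ⁻¹' C with hD
  have hDopen : IsOpen D := hopen s.card ptQ
  have hdD : ∀ i, d i ∈ D := fun i => by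
    simp only [hD, Set.mem_preimage, hptQd i]; exact hp i
  -- coordinates of φ x₀
  set y₀ : Fin s.card → ℝ := π (φ x₀) with hy₀def
  have hy₀ : y₀ = ∑ i, l i • (fun j => ((d i j : ℝ))) := by
    rw [hy₀def, hsum, map_sum]
    refine Finset.sum_congr rfl fun i _ => ?_
    rw [map_smul, ← hpa i]
    funext j
    simp only [Pi.smul_apply, hπ_apply, smul_eq_mul]
    rw [hrepr_tmul]
  obtain ⟨ε, hε, hball⟩ := ball_subset_coneGen hDopen (hdD 0)
  have hl0 : (0:ℝ) < l 0 := hl 0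
  have hl0' : l 0 ≠ 0 := ne_of_gt hl0
  -- the neighborhood
  have hcont : Continuous (π ∘ₗ φ) := (π ∘ₗ φ).continuous_of_finiteDimensional
  refine Filter.mem_of_superset
    ((hcont.isOpen_preimage (Metric.ball y₀ (l 0 * ε)) Metric.isOpen_ball).mem_nhds ?_) ?_
  · show (π ∘ₗ φ) x₀ ∈ Metric.ball y₀ (l 0 * ε)
    simp only [LinearMap.comp_apply, ← hy₀def]
    exact Metric.mem_ball_self (by positivity)
  intro x hx
  simp only [Set.mem_preimage, LinearMap.comp_apply] at hx
  set c : Fin s.card → ℝ := π (φ x) with hc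
  have hdist : ∀ j, |c j - y₀ j| < l 0 * ε := fun j =>
    lt_of_le_of_lt (Real.dist_eq (c j) (y₀ j) ▸ dist_le_pi_dist c y₀ j) hx
  set c' : Fin s.card → ℝ :=
    (l 0)⁻¹ • (c - ∑ i : Fin k, l i.succ • (fun j => ((d i.succ j : ℝ)))) with hc'
  have hyj : ∀ j, y₀ j = l 0 * (d 0 j : ℝ) + ∑ i : Fin k, l i.succ * (d i.succ j : ℝ) := by
    intro j
    rw [hy₀, Fin.sum_univ_succ]
    simp [Finset.sum_apply]
  have hc'near : ∀ j, |c' j - (d 0 j : ℝ)| < ε := by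
    intro j
    have heq : c' j - (d 0 j : ℝ) = (l 0)⁻¹ * (c j - y₀ j) := by
      simp only [hc', Pi.smul_apply, Pi.sub_apply, Finset.sum_apply, Pi.smul_apply,
        smul_eq_mul, hyj j]
      field_simp
      ring
    rw [heq, abs_mul, abs_of_pos (inv_pos.mpr hl0)]
    calc (l 0)⁻¹ * |c j - y₀ j| < (l 0)⁻¹ * (l 0 * ε) := by
          exact (mul_lt_mul_iff_right₀ (inv_pos.mpr hl0)).mpr (hdist j)
      _ = ε := by field_simp
  have hc'cone := hball c' hc'near
  -- assemble c as a positive combination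
  set g : Fin (k+1) → (Fin s.card → ℝ) :=
    Fin.cons (l 0 • c') (fun i => l i.succ • (fun j => ((d i.succ j : ℝ)))) with hg
  have hgcone : ∀ i, g i ∈ coneGen ℝ ((fun dd : Fin s.card → ℚ => fun i => ((dd i : ℝ))) '' D) := by
    intro i
    refine Fin.cases ?_ ?_ i
    · rw [hg, Fin.cons_zero]
      exact smul_mem_coneGen' hc'cone hl0
    · intro i
      rw [hg, Fin.cons_succ]
      have hm : (fun j => ((d i.succ j : ℝ))) ∈
          (fun dd : Fin s.card → ℚ => fun i => ((dd i : ℝ))) '' D :=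
        ⟨d i.succ, hdD i.succ, rfl⟩
      exact smul_mem_coneGen (K := ℝ) hm (hl i.succ)
  have hcsum : c = ∑ i, g i := by
    rw [Fin.sum_univ_succ]
    simp only [hg, Fin.cons_zero, Fin.cons_succ]
    rw [hc', smul_inv_smul₀ hl0']
    abel
  have hccone : c ∈ coneGen ℝ ((fun dd : Fin s.card → ℚ => fun i => ((dd i : ℝ))) '' D) := by
    rw [hcsum]
    exact sum_mem_coneGen Finset.univ_nonempty fun i _ => hgcone i
  show x ∈ ⇑φ ⁻¹' coneGen ℝ ((fun p : P => ((1 : ℝ) ⊗ₜ[ℚ] p : ℝ ⊗[ℚ] P)) '' C)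
  simp only [Set.mem_preimage]
  have hφx : φ x = ptR c := (hrecon (φ x) (hsuppφ x)).symm
  rw [hφx]
  refine coneGen_mono ?_ (map_mem_coneGen ptR hccone)
  rintro _ ⟨_, ⟨dd, hdd, rfl⟩, rfl⟩
  exact ⟨ptQ dd, hdd, (hK2 dd).symm⟩
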